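/- For a uniformly random word w of length k over {L,R}, the expected value of each diagonal entry of M_w is (3^k + 1)/2^{k+1}, and hence the expected trace is (3^k + 1)/2^k. -/

import Mathlib

open Matrix MeasureTheory BigOperators

def Lm : Matrix (Fin 2) (Fin 2) ℤ := !![1,1;0,1]
def Rm : Matrix (Fin 2) (Fin 2) ℤ := !![1,0;1,1]

/-- Ordered product of the matrices corresponding to a word over {L,R}. -/
def Mw {k : ℕ} (w : Fin k → Fin 2) : Matrix (Fin 2) (Fin 2) ℤ :=
  (List.ofFn (fun i => if w i = 0 then Lm else Rm)).prod

lemma Mw_cons {k : ℕ} (a : Fin 2) (w : Fin k → Fin 2) :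
    Mw (Fin.cons a w) = (if a = 0 then Lm else Rm) * Mw w := by
  simp [Mw, List.ofFn_succ]

lemma sum_Mw (k : ℕ) : ∑ w : Fin k → Fin 2, Mw w = (Lm + Rm) ^ k := by
  induction k with
  | zero => simp [Mw]
  | succ k ih =>
    rw [← (Fin.consEquiv (fun _ : Fin (k+1) => Fin 2)).sum_comp]
    simp only [Fin.consEquiv, Equiv.coe_fn_mk, Fintype.sum_prod_type, Fin.sum_univ_two, Mw_cons,
      ← Finset.mul_sum, ih, if_pos rfl]
    simp only [if_true, if_neg (show ¬(1:Fin 2)=0 by decide), ← Finset.mul_sum, ih,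
      pow_succ', add_mul]

lemma two_smul_pow (k : ℕ) :
    (2 : ℤ) • (Lm + Rm) ^ k = !![3^k+1, 3^k-1; 3^k-1, 3^k+1] := by
  induction k with
  | zero =>
    ext i j
    fin_cases i <;> fin_cases j <;> simp
  | succ k ih =>
    have h : Lm + Rm = !![2,1;1,2] := by
      ext i j; fin_cases i <;> fin_cases j <;> simp [Lm, Rm]
    rw [pow_succ', ← mul_smul_comm, ih, h]
    ext i j
    fin_cases i <;> fin_cases j <;>
      simp [Matrix.mul_apply, Fin.sum_univ_two, pow_succ] <;> ring

/-- For a uniformly random word of length k, the expected value of each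
diagonal entry is (3^k+1)/2^(k+1), hence the expected trace is (3^k+1)/2^k. -/
theorem expected_diagonal_and_trace (k : ℕ) :
    (∑ w : Fin k → Fin 2, (Mw w 0 0 : ℝ)) / 2 ^ k = (3 ^ k + 1) / 2 ^ (k + 1) ∧
    (∑ w : Fin k → Fin 2, (Mw w 1 1 : ℝ)) / 2 ^ k = (3 ^ k + 1) / 2 ^ (k + 1) ∧
    (∑ w : Fin k → Fin 2, ((Mw w).trace : ℝ)) / 2 ^ k = (3 ^ k + 1) / 2 ^ k := by
  have h := two_smul_pow k
  rw [← sum_Mw] at h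
  have h00 : ((2:ℤ) * ∑ w : Fin k → Fin 2, Mw w 0 0) = 3^k+1 := by
    have := congrFun (congrFun h 0) 0
    simpa [Matrix.sum_apply] using this
  have h11 : ((2:ℤ) * ∑ w : Fin k → Fin 2, Mw w 1 1) = 3^k+1 := by
    have := congrFun (congrFun h 1) 1
    simpa [Matrix.sum_apply] using this
  have e00 : (∑ w : Fin k → Fin 2, (Mw w 0 0 : ℝ)) = (3^k+1)/2 := by
    have := congrArg (Int.cast : ℤ → ℝ) h00
    push_cast at this
    linarith
  have e11 : (∑ w : Fin k → Fin 2, (Mw w 1 1 : ℝ)) = (3^k+1)/2 := by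
    have := congrArg (Int.cast : ℤ → ℝ) h11
    push_cast at this
    linarith
  refine ⟨by rw [e00, pow_succ]; ring, by rw [e11, pow_succ]; ring, ?_⟩
  have : (∑ w : Fin k → Fin 2, ((Mw w).trace : ℝ)) =
      (∑ w : Fin k → Fin 2, (Mw w 0 0 : ℝ)) + ∑ w : Fin k → Fin 2, (Mw w 1 1 : ℝ) := by
    rw [← Finset.sum_add_distrib]
    congr 1; ext w
    rw [Matrix.trace_fin_two]; push_cast; ring
  rw [this, e00, e11]
  have h2 : (2:ℝ)^k ≠ 0 := by positivity
  field_simp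
  norm_num
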